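/- Let {Λ_i} be a g-frame for H with g-frame operator S. For every alternate dual g-frame {Γ_i} of {Λ_i} and every x ∈ H, ∑_i ‖Λ_i x − Γ_i x‖² ≥ ∑_i ‖Λ_i x − Λ_i S^{-1} x‖², with equality for all x if and only if Γ_i = Λ_i S^{-1} for all i. -/

import Mathlib

set_option maxHeartbeats 1000000


/-- For a g-frame `{Λ i}` with frame operator `S` and any alternate dual g-frame
`{Γ i}`: `∑ i ‖Λ i x − Γ i x‖² ≥ ∑ i ‖Λ i x − Λ i S⁻¹ x‖²` for all `x`, with equality
for all `x` iff `Γ i = Λ i S⁻¹` for all `i`. -/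
theorem gframe_alternate_dual_best_approx_pointwise
    {H K : Type*} [NormedAddCommGroup H] [InnerProductSpace ℂ H] [CompleteSpace H]
    [NormedAddCommGroup K] [InnerProductSpace ℂ K] [CompleteSpace K]
    {I : Type*} (Λ Γ : I → (H →L[ℂ] K)) (S Sinv : H →L[ℂ] H)
    (A B C D : ℝ) (hA : 0 < A) (hB : 0 < B) (hC : 0 < C) (hD : 0 < D)
    (hΛsum : ∀ x : H, Summable fun i => ‖Λ i x‖ ^ 2)
    (hΛlow : ∀ x : H, A * ‖x‖ ^ 2 ≤ ∑' i, ‖Λ i x‖ ^ 2)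
    (hΛup : ∀ x : H, ∑' i, ‖Λ i x‖ ^ 2 ≤ B * ‖x‖ ^ 2)
    (hΓsum : ∀ x : H, Summable fun i => ‖Γ i x‖ ^ 2)
    (hΓlow : ∀ x : H, C * ‖x‖ ^ 2 ≤ ∑' i, ‖Γ i x‖ ^ 2)
    (hΓup : ∀ x : H, ∑' i, ‖Γ i x‖ ^ 2 ≤ D * ‖x‖ ^ 2)
    (hS : ∀ x : H, HasSum (fun i => (Λ i).adjoint (Λ i x)) (S x))
    (hSinv₁ : ∀ x : H, S (Sinv x) = x) (hSinv₂ : ∀ x : H, Sinv (S x) = x)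
    (hdual : ∀ x : H, HasSum (fun i => (Λ i).adjoint (Γ i x)) x) :
    (∀ x : H, (∑' i, ‖Λ i x - Λ i (Sinv x)‖ ^ 2) ≤ ∑' i, ‖Λ i x - Γ i x‖ ^ 2) ∧
    ((∀ x : H, (∑' i, ‖Λ i x - Γ i x‖ ^ 2) = ∑' i, ‖Λ i x - Λ i (Sinv x)‖ ^ 2)
      ↔ ∀ i, Γ i = (Λ i) ∘L Sinv) := by
  -- residual summability
  have hrsum : ∀ x : H, Summable fun i => ‖Γ i x - Λ i (Sinv x)‖ ^ 2 := by
    intro x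
    have hg : Summable (fun i => 2 * ‖Γ i x‖ ^ 2 + 2 * ‖Λ i (Sinv x)‖ ^ 2) :=
      ((hΓsum x).mul_left 2).add ((hΛsum (Sinv x)).mul_left 2)
    refine Summable.of_nonneg_of_le (fun i => by positivity) (fun i => ?_) hg
    have h1 : ‖Γ i x - Λ i (Sinv x)‖ ≤ ‖Γ i x‖ + ‖Λ i (Sinv x)‖ := norm_sub_le _ _
    nlinarith [mul_self_le_mul_self (norm_nonneg (Γ i x - Λ i (Sinv x))) h1,
      sq_nonneg (‖Γ i x‖ - ‖Λ i (Sinv x)‖)]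
  -- key identity
  have key : ∀ x : H, (∑' i, ‖Λ i x - Γ i x‖ ^ 2)
      = (∑' i, ‖Λ i x - Λ i (Sinv x)‖ ^ 2) + ∑' i, ‖Γ i x - Λ i (Sinv x)‖ ^ 2 := by
    intro x
    set y := x - Sinv x with hy
    have ha : ∀ i, Λ i x - Λ i (Sinv x) = Λ i y := by
      intro i; rw [hy, map_sub]
    -- sum of adjoints of residuals is zero
    have hr0 : HasSum (fun i => (Λ i).adjoint (Γ i x - Λ i (Sinv x))) 0 := by
      have := (hdual x).sub (hS (Sinv x))
      rw [hSinv₁ x, sub_self] at this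
      simpa [map_sub] using this
    have hcross : HasSum (fun i =>
        (inner ℂ (Λ i y) (Γ i x - Λ i (Sinv x)) : ℂ)) 0 := by
      have h1 : HasSum (fun i =>
          (inner ℂ y ((Λ i).adjoint (Γ i x - Λ i (Sinv x))) : ℂ)) 0 := by
        simpa [inner_sub_right] using (innerSL ℂ y).hasSum hr0
      simpa [inner_sub_right, ContinuousLinearMap.adjoint_inner_right] using h1
    have hcrossRe : HasSum (fun i =>
        (Complex.re (inner ℂ (Λ i y) (Γ i x - Λ i (Sinv x)) : ℂ))) 0 := by
      simpa using Complex.reCLM.hasSum hcross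
    have haSum : HasSum (fun i => ‖Λ i y‖ ^ 2) (∑' i, ‖Λ i y‖ ^ 2) := (hΛsum y).hasSum
    have hrSum : HasSum (fun i => ‖Γ i x - Λ i (Sinv x)‖ ^ 2)
        (∑' i, ‖Γ i x - Λ i (Sinv x)‖ ^ 2) := (hrsum x).hasSum
    have hcomb : HasSum (fun i => ‖Λ i y‖ ^ 2
        - 2 * Complex.re (inner ℂ (Λ i y) (Γ i x - Λ i (Sinv x)) : ℂ)
        + ‖Γ i x - Λ i (Sinv x)‖ ^ 2)
        ((∑' i, ‖Λ i y‖ ^ 2) + ∑' i, ‖Γ i x - Λ i (Sinv x)‖ ^ 2) := by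
      have := (haSum.sub (hcrossRe.mul_left 2)).add hrSum
      simpa using this
    have hterm : ∀ i, ‖Λ i x - Γ i x‖ ^ 2 = ‖Λ i y‖ ^ 2
        - 2 * Complex.re (inner ℂ (Λ i y) (Γ i x - Λ i (Sinv x)) : ℂ)
        + ‖Γ i x - Λ i (Sinv x)‖ ^ 2 := by
      intro i
      have : Λ i x - Γ i x = Λ i y - (Γ i x - Λ i (Sinv x)) := by
        rw [hy, map_sub]; abel
      rw [this]
      exact @norm_sub_sq ℂ _ _ _ _ (Λ i y) (Γ i x - Λ i (Sinv x))
    calc (∑' i, ‖Λ i x - Γ i x‖ ^ 2)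
        = ∑' i, (‖Λ i y‖ ^ 2
          - 2 * Complex.re (inner ℂ (Λ i y) (Γ i x - Λ i (Sinv x)) : ℂ)
          + ‖Γ i x - Λ i (Sinv x)‖ ^ 2) := by
          exact tsum_congr hterm
      _ = (∑' i, ‖Λ i y‖ ^ 2) + ∑' i, ‖Γ i x - Λ i (Sinv x)‖ ^ 2 := hcomb.tsum_eq
      _ = (∑' i, ‖Λ i x - Λ i (Sinv x)‖ ^ 2) + ∑' i, ‖Γ i x - Λ i (Sinv x)‖ ^ 2 := by
          congr 1; exact tsum_congr fun i => by rw [ha i]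
  constructor
  · intro x
    rw [key x]
    have : 0 ≤ ∑' i, ‖Γ i x - Λ i (Sinv x)‖ ^ 2 :=
      tsum_nonneg fun i => by positivity
    linarith
  · constructor
    · intro heq i
      ext x
      have h0 : (∑' j, ‖Γ j x - Λ j (Sinv x)‖ ^ 2) = 0 := by
        have := key x
        rw [heq x] at this
        linarith
      have hle : ‖Γ i x - Λ i (Sinv x)‖ ^ 2 ≤ ∑' j, ‖Γ j x - Λ j (Sinv x)‖ ^ 2 :=
        Summable.le_tsum (hrsum x) i (fun j _ => by positivity)
      have hz : ‖Γ i x - Λ i (Sinv x)‖ ^ 2 = 0 := le_antisymm (h0 ▸ hle) (by positivity)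
      have h2 : ‖Γ i x - Λ i (Sinv x)‖ = 0 := by
        have := pow_eq_zero_iff (n := 2) (by norm_num) |>.mp hz
        exact this
      have h3 := norm_eq_zero.mp h2
      have h4 : Γ i x = Λ i (Sinv x) := sub_eq_zero.mp h3
      simpa using h4
    · intro hΓ x
      rw [key x]
      have hzz : ∀ i, ‖Γ i x - Λ i (Sinv x)‖ ^ 2 = 0 := by
        intro i
        rw [hΓ i, ContinuousLinearMap.comp_apply, sub_self, norm_zero]
        norm_num
      rw [tsum_congr hzz, tsum_zero, add_zero]
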